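/- The generating function \sum_{n \ge 0} r(n) x^n, where r(n) counts words of length n over \mathbb{Z}_q starting in I, ending in J, with no k consecutive letters from I nor k consecutive letters from J (and r(0) = 1), satisfies (1 - qx + (|I|^k|J| + |I||J|^k)x^{k+1} - |I|^k|J|^k x^{2k}) \sum_{n \ge 0} r(n)x^n = |I||J|x^2 - qx + 1 as formal power series. -/

import Mathlib

open List Finset

namespace S13

variable {α : Type*}

lemma infix_append_cases {t u m : List α} (h : t <:+: u ++ m) :
    t <:+: u ∨ t <:+: m ∨
      ∃ t₁ t₂, t = t₁ ++ t₂ ∧ t₁ ≠ [] ∧ t₂ ≠ [] ∧ t₁ <:+ u ∧ t₂ <+: m := by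
  obtain ⟨s, e, he⟩ := h
  rw [List.append_assoc] at he
  rcases List.append_eq_append_iff.mp he with ⟨a, ha, hb⟩ | ⟨c, _, hm⟩
  · rcases List.append_eq_append_iff.mp hb with ⟨b, hb1, _⟩ | ⟨c2, hc1, hm2⟩
    · exact Or.inl ⟨s, b, by rw [ha, hb1, List.append_assoc]⟩
    · rcases eq_or_ne a [] with rfl | ha0
      · refine Or.inr (Or.inl ?_)
        have ht : t = c2 := by simpa using hc1
        subst ht
        exact List.IsPrefix.isInfix ⟨e, hm2.symm⟩
      · rcases eq_or_ne c2 [] with rfl | hc0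
        · refine Or.inl ?_
          have : t <:+ u := by rw [hc1, List.append_nil]; exact ⟨s, ha.symm⟩
          exact this.isInfix
        · exact Or.inr (Or.inr ⟨a, c2, hc1, ha0, hc0, ⟨s, ha.symm⟩, ⟨e, hm2.symm⟩⟩)
  · exact Or.inr (Or.inl ⟨c, e, by rw [hm, List.append_assoc]⟩)

lemma takeWhile_append_all {p : α → Bool} {u m : List α} (h : ∀ x ∈ u, p x) :
    (u ++ m).takeWhile p = u ++ m.takeWhile p := by
  rw [List.takeWhile_append, if_pos]
  rw [List.takeWhile_eq_self_iff.mpr h]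

lemma dropWhile_append_all {p : α → Bool} {u m : List α} (h : ∀ x ∈ u, p x) :
    (u ++ m).dropWhile p = m.dropWhile p := by
  rw [List.dropWhile_append, if_pos]
  rw [List.dropWhile_eq_nil_iff.mpr h]
  rfl

lemma takeWhile_eq_nil_of_head {p : α → Bool} {m : List α} (hm : m ≠ [])
    (h : p (m.head hm) = false) : m.takeWhile p = [] := by
  cases m with
  | nil => rfl
  | cons x xs => simp only [List.head_cons] at h; simp [List.takeWhile_cons, h]

lemma dropWhile_eq_self_of_head {p : α → Bool} {m : List α} (hm : m ≠ [])
    (h : p (m.head hm) = false) : m.dropWhile p = m := by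
  cases m with
  | nil => rfl
  | cons x xs => simp only [List.head_cons] at h; simp [List.dropWhile_cons, h]

lemma takeWhile_ne_nil_of_head {p : α → Bool} {m : List α} (hm : m ≠ [])
    (h : p (m.head hm) = true) : m.takeWhile p ≠ [] := by
  cases m with
  | nil => exact absurd rfl hm
  | cons x xs =>
    simp only [List.head_cons] at h
    simp [List.takeWhile_cons, h]

lemma getLast_suffix {t w : List α} (h : t <:+ w) (ht : t ≠ []) (hw : w ≠ []) :
    t.getLast ht = w.getLast hw := by
  obtain ⟨s, rfl⟩ := h
  rw [List.getLast_append]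
  simp [ht]

end S13

namespace S13

variable {q : ℕ}

def NoRun (k : ℕ) (S : Finset (Fin q)) (w : List (Fin q)) : Prop :=
  ¬ ∃ v : List (Fin q), v.length = k ∧ (∀ a ∈ v, a ∈ S) ∧ v <:+: w

def Valid (k : ℕ) (I J : Finset (Fin q)) (w : List (Fin q)) : Prop :=
  ∃ h : w ≠ [], w.head h ∈ I ∧ w.getLast h ∈ J ∧ NoRun k I w ∧ NoRun k J w

def VN (k : ℕ) (I J : Finset (Fin q)) (w : List (Fin q)) : Prop :=
  w = [] ∨ Valid k I J w

lemma norun_mono {k : ℕ} {S : Finset (Fin q)} {t w : List (Fin q)} (h : t <:+: w)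
    (hw : NoRun k S w) : NoRun k S t :=
  fun ⟨v, h1, h2, h3⟩ => hw ⟨v, h1, h2, h3.trans h⟩

lemma length_lt_of_all_mem {k : ℕ} {S : Finset (Fin q)} {t w : List (Fin q)}
    (hw : NoRun k S w) (ht : t <:+: w) (hall : ∀ x ∈ t, x ∈ S) : t.length < k := by
  by_contra h
  push_neg at h
  exact hw ⟨t.take k, by simp [List.length_take]; omega,
    fun x hx => hall x (List.take_subset _ _ hx), ((List.take_prefix k t).isInfix).trans ht⟩

lemma head_of_prefix {x m : List (Fin q)} (h : x <+: m) (hx : x ≠ []) (hm : m ≠ []) :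
    x.head hx = m.head hm := by
  obtain ⟨e, rfl⟩ := h
  rw [List.head_append]
  simp [hx]

variable (I J : Finset (Fin q))

def dec1 (w : List (Fin q)) : List (Fin q) := w.takeWhile (fun x => decide (x ∈ I))
def rest1 (w : List (Fin q)) : List (Fin q) := w.dropWhile (fun x => decide (x ∈ I))
def dec2 (w : List (Fin q)) : List (Fin q) := (rest1 I w).takeWhile (fun x => decide (x ∈ J))
def dec3 (w : List (Fin q)) : List (Fin q) := (rest1 I w).dropWhile (fun x => decide (x ∈ J))

lemma dec_append (w : List (Fin q)) : dec1 I w ++ (dec2 I J w ++ dec3 I J w) = w := by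
  rw [dec2, dec3, List.takeWhile_append_dropWhile, dec1, rest1,
    List.takeWhile_append_dropWhile]

variable {I J}

lemma comp_dec (hd : Disjoint I J) (hun : I ∪ J = Finset.univ) {k : ℕ}
    {u v t : List (Fin q)}
    (hu1 : u ≠ []) (hu2 : ∀ x ∈ u, x ∈ I)
    (hv1 : v ≠ []) (hv2 : ∀ x ∈ v, x ∈ J) (ht : VN k I J t) :
    dec1 I (u ++ v ++ t) = u ∧ dec2 I J (u ++ v ++ t) = v ∧ dec3 I J (u ++ v ++ t) = t := by
  have hnotI : ∀ x ∈ J, x ∉ I := fun x hx => (Finset.disjoint_right.mp hd) hx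
  have hnotJ : ∀ x ∈ I, x ∉ J := fun x hx => (Finset.disjoint_left.mp hd) hx
  have hvt : v ++ t ≠ [] := by simp [hv1]
  have hheadvt : (v ++ t).head hvt = v.head hv1 := by rw [List.head_append]; simp [hv1]
  have hheadvtJ : (v ++ t).head hvt ∈ J := by
    rw [hheadvt]; exact hv2 _ (List.head_mem hv1)
  have h1 : dec1 I (u ++ v ++ t) = u := by
    rw [List.append_assoc, dec1, takeWhile_append_all (fun x hx => by simp [hu2 x hx]),
      takeWhile_eq_nil_of_head hvt (by simp [hnotI _ hheadvtJ]), List.append_nil]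
  have hr1 : rest1 I (u ++ v ++ t) = v ++ t := by
    rw [List.append_assoc, rest1, dropWhile_append_all (fun x hx => by simp [hu2 x hx]),
      dropWhile_eq_self_of_head hvt (by simp [hnotI _ hheadvtJ])]
  have htw : t.takeWhile (fun x => decide (x ∈ J)) = [] ∧
      t.dropWhile (fun x => decide (x ∈ J)) = t := by
    rcases ht with rfl | ⟨hne, hhead, -⟩
    · exact ⟨rfl, rfl⟩
    · exact ⟨takeWhile_eq_nil_of_head hne (by simp [hnotJ _ hhead]),
        dropWhile_eq_self_of_head hne (by simp [hnotJ _ hhead])⟩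
  refine ⟨h1, ?_, ?_⟩
  · rw [dec2, hr1, takeWhile_append_all (fun x hx => by simp [hv2 x hx]), htw.1,
      List.append_nil]
  · rw [dec3, hr1, dropWhile_append_all (fun x hx => by simp [hv2 x hx]), htw.2]

lemma comp_valid (hd : Disjoint I J) (hun : I ∪ J = Finset.univ) {k : ℕ} (hk : 2 ≤ k)
    {u v t : List (Fin q)}
    (hu1 : u ≠ []) (hu2 : ∀ x ∈ u, x ∈ I) (hu3 : u.length < k)
    (hv1 : v ≠ []) (hv2 : ∀ x ∈ v, x ∈ J) (hv3 : v.length < k)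
    (ht : VN k I J t) : Valid k I J (u ++ v ++ t) := by
  have hnotI : ∀ x ∈ J, x ∉ I := fun x hx => (Finset.disjoint_right.mp hd) hx
  have hnotJ : ∀ x ∈ I, x ∉ J := fun x hx => (Finset.disjoint_left.mp hd) hx
  have hw : u ++ v ++ t ≠ [] := by simp [hu1]
  refine ⟨hw, ?_, ?_, ?_, ?_⟩
  · rw [List.head_append]
    split
    · next h => exact absurd (List.append_ne_nil_of_left_ne_nil hu1 v) (by simpa using h)
    · rw [List.head_append]; simp only [List.isEmpty_iff]
      split
      · next h => exact absurd h hu1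
      · exact hu2 _ (List.head_mem hu1)
  · rcases ht with rfl | ⟨hne, -, hlast, -⟩
    · rw [List.getLast_append]
      rw [dif_pos List.isEmpty_nil, List.getLast_append]
      simp only [List.isEmpty_iff]
      split
      · next h => exact absurd h hv1
      · exact hv2 _ (List.getLast_mem hv1)
    · rw [List.getLast_append]
      simp only [List.isEmpty_iff]
      split
      · next h => exact absurd h hne
      · exact hlast
  · -- NoRun I
    rintro ⟨x, hxlen, hxall, hxinf⟩
    have hxne : x ≠ [] := by intro h; rw [h] at hxlen; simp at hxlen; omega
    rw [List.append_assoc] at hxinf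
    rcases infix_append_cases hxinf with h | h | ⟨x₁, x₂, rfl, hx1, hx2, hs, hp⟩
    · have := h.length_le; omega
    · rcases infix_append_cases h with h' | h' | ⟨x₁, x₂, rfl, hx1, hx2, hs, hp⟩
      · obtain ⟨y, hy⟩ := List.exists_mem_of_ne_nil x hxne
        exact hnotI y (hv2 y (h'.subset hy)) (hxall y hy)
      · rcases ht with rfl | ⟨hne, hh, hl, hnI, hnJ⟩
        · rw [List.infix_nil] at h'; exact hxne h'
        · exact hnI ⟨x, hxlen, hxall, h'⟩
      · obtain ⟨y, hy⟩ := List.exists_mem_of_ne_nil x₁ hx1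
        exact hnotI y (hv2 y (hs.subset hy)) (hxall y (by simp [hy]))
    · -- x₂ nonempty prefix of v ++ t, but x₂ ⊆ I and head (v++t) ∈ J
      have hvt : v ++ t ≠ [] := by simp [hv1]
      have : x₂.head hx2 = (v ++ t).head hvt := head_of_prefix hp hx2 hvt
      have hJ : x₂.head hx2 ∈ J := by
        rw [this, List.head_append]
        simp only [List.isEmpty_iff]
        split
        · next h => exact absurd h hv1
        · exact hv2 _ (List.head_mem hv1)
      exact hnotI _ hJ (hxall _ (by simp [List.head_mem hx2]))
  · -- NoRun J
    rintro ⟨x, hxlen, hxall, hxinf⟩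
    have hxne : x ≠ [] := by intro h; rw [h] at hxlen; simp at hxlen; omega
    rw [List.append_assoc] at hxinf
    have hcase2 : ¬ (x <:+: v ++ t) := by
      intro h
      rcases infix_append_cases h with h' | h' | ⟨x₁, x₂, rfl, hx1, hx2, hs, hp⟩
      · have := h'.length_le; omega
      · rcases ht with rfl | ⟨hne, hh, hl, hnI, hnJ⟩
        · rw [List.infix_nil] at h'; exact hxne h'
        · exact hnJ ⟨x, hxlen, hxall, h'⟩
      · rcases ht with rfl | ⟨hne, hh, hl, hnI, hnJ⟩
        · rw [List.prefix_nil] at hp; exact hx2 hp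
        · have : x₂.head hx2 = t.head hne := head_of_prefix hp hx2 hne
          exact hnotJ _ (this ▸ hh) (hxall _ (by simp [List.head_mem hx2]))
    rcases infix_append_cases hxinf with h | h | ⟨x₁, x₂, rfl, hx1, hx2, hs, hp⟩
    · obtain ⟨y, hy⟩ := List.exists_mem_of_ne_nil x hxne
      exact hnotJ y (hu2 y (h.subset hy)) (hxall y hy)
    · exact hcase2 h
    · obtain ⟨y, hy⟩ := List.exists_mem_of_ne_nil x₁ hx1
      exact hnotJ y (hu2 y (hs.subset hy)) (hxall y (by simp [hy]))

end S13

namespace S13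

variable {q : ℕ} {I J : Finset (Fin q)}

lemma dec_spec (hd : Disjoint I J) (hun : I ∪ J = Finset.univ) {k : ℕ}
    {w : List (Fin q)} (hw : Valid k I J w) :
    (dec1 I w ≠ [] ∧ (∀ x ∈ dec1 I w, x ∈ I) ∧ (dec1 I w).length < k) ∧
    (dec2 I J w ≠ [] ∧ (∀ x ∈ dec2 I J w, x ∈ J) ∧ (dec2 I J w).length < k) ∧
    VN k I J (dec3 I J w) := by
  obtain ⟨hne, hhead, hlast, hnI, hnJ⟩ := hw
  have hmemJ : ∀ x : Fin q, x ∉ I → x ∈ J := fun x hx => by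
    rcases Finset.mem_union.mp (hun ▸ Finset.mem_univ x) with h | h
    · exact absurd h hx
    · exact h
  have hmemI : ∀ x : Fin q, x ∉ J → x ∈ I := fun x hx => by
    rcases Finset.mem_union.mp (hun ▸ Finset.mem_univ x) with h | h
    · exact h
    · exact absurd h hx
  have hu2 : ∀ x ∈ dec1 I w, x ∈ I := fun x hx => by
    simpa using List.mem_takeWhile_imp
      (show x ∈ List.takeWhile (fun y => decide (y ∈ I)) w from hx)
  have hu1 : dec1 I w ≠ [] := takeWhile_ne_nil_of_head hne (by simp [hhead])
  have hu3 : (dec1 I w).length < k :=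
    length_lt_of_all_mem hnI (List.takeWhile_prefix _).isInfix hu2
  have hrne : rest1 I w ≠ [] := by
    intro h
    have hall : ∀ x ∈ w, x ∈ I := fun x hx =>
      of_decide_eq_true (List.dropWhile_eq_nil_iff.mp h x hx)
    exact (Finset.disjoint_left.mp hd) (hall _ (List.getLast_mem hne)) hlast
  have hrhead : (rest1 I w).head hrne ∈ J := by
    apply hmemJ
    have := List.head_dropWhile_not (fun x => decide (x ∈ I)) hrne
    simpa [rest1] using this
  have hv1 : dec2 I J w ≠ [] := takeWhile_ne_nil_of_head hrne (by simp [hrhead])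
  have hv2 : ∀ x ∈ dec2 I J w, x ∈ J := fun x hx => by
    simpa using List.mem_takeWhile_imp
      (show x ∈ List.takeWhile (fun y => decide (y ∈ J)) (rest1 I w) from hx)
  have hvinf : dec2 I J w <:+: w :=
    List.infix_iff_prefix_suffix.mpr ⟨rest1 I w, List.takeWhile_prefix _,
      List.dropWhile_suffix _⟩
  have hv3 : (dec2 I J w).length < k := length_lt_of_all_mem hnJ hvinf hv2
  refine ⟨⟨hu1, hu2, hu3⟩, ⟨hv1, hv2, hv3⟩, ?_⟩
  rcases eq_or_ne (dec3 I J w) [] with h | h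
  · exact Or.inl h
  · refine Or.inr ⟨h, ?_, ?_, ?_, ?_⟩
    · apply hmemI
      have := List.head_dropWhile_not (fun x => decide (x ∈ J)) h
      simpa [dec3] using this
    · have hsuf : dec3 I J w <:+ w := (List.dropWhile_suffix _).trans (List.dropWhile_suffix _)
      rw [getLast_suffix hsuf h hne]
      exact hlast
    · exact norun_mono ((List.dropWhile_suffix _).trans (List.dropWhile_suffix _)).isInfix hnI
    · exact norun_mono ((List.dropWhile_suffix _).trans (List.dropWhile_suffix _)).isInfix hnJ

lemma finite_subtype (n : ℕ) (Q : List (Fin q) → Prop) :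
    Finite {w : List (Fin q) // w.length = n ∧ Q w} := by
  apply Finite.of_injective (fun w : {w : List (Fin q) // w.length = n ∧ Q w} =>
    (fun i : Fin n => w.1.get ⟨i.1, by rw [w.2.1]; exact i.2⟩))
  intro w w' h
  apply Subtype.ext
  apply List.ext_get (by rw [w.2.1, w'.2.1])
  intro i h1 h2
  have := congrFun h ⟨i, by rw [← w.2.1]; exact h1⟩
  simpa using this

def runT (S : Finset (Fin q)) (m : ℕ) : Type _ :=
  {u : List (Fin q) // u.length = m ∧ ∀ x ∈ u, x ∈ S}

lemma card_runT (S : Finset (Fin q)) : ∀ m, Nat.card (runT S m) = S.card ^ m := by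
  intro m
  induction m with
  | zero =>
    have e : runT S 0 ≃ Unit :=
      { toFun := fun _ => Unit.unit
        invFun := fun _ => ⟨[], rfl, by simp⟩
        left_inv := fun u => Subtype.ext (List.eq_nil_of_length_eq_zero u.2.1).symm
        right_inv := fun _ => rfl }
    rw [Nat.card_congr e]
    simp
  | succ m ih =>
    have e : runT S (m + 1) ≃ {x // x ∈ S} × runT S m :=
      { toFun := fun u =>
          (⟨u.1.head (by intro h; have := u.2.1; rw [h] at this; simp at this),
            u.2.2 _ (List.head_mem _)⟩,
           ⟨u.1.tail, by simp [List.length_tail, u.2.1],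
            fun x hx => u.2.2 x (List.mem_of_mem_tail hx)⟩)
        invFun := fun p =>
          ⟨p.1.1 :: p.2.1, by simp [p.2.2.1], by
            intro x hx
            rcases List.mem_cons.mp hx with rfl | hx
            · exact p.1.2
            · exact p.2.2.2 x hx⟩
        left_inv := fun u => Subtype.ext (List.cons_head_tail _)
        right_inv := fun p => by
          refine Prod.ext (Subtype.ext ?_) (Subtype.ext ?_) <;> simp }
    rw [Nat.card_congr e, Nat.card_prod, Nat.card_eq_finsetCard, ih, pow_succ, mul_comm]

end S13

namespace S13

variable {q : ℕ} {I J : Finset (Fin q)}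

lemma card_partition {T : Type*} [Finite T] {β : Type*} [DecidableEq β] (f : T → β)
    (P : Finset β) (hf : ∀ w, f w ∈ P) :
    Nat.card T = ∑ p ∈ P, Nat.card {w : T // f w = p} := by
  classical
  letI : Fintype T := Fintype.ofFinite T
  rw [Nat.card_eq_fintype_card, ← Finset.card_univ,
    Finset.card_eq_sum_card_fiberwise (fun x _ => hf x)]
  refine Finset.sum_congr rfl fun p _ => ?_
  rw [Nat.card_eq_fintype_card, Fintype.card_subtype]

noncomputable def cnt (k : ℕ) (I J : Finset (Fin q)) (m : ℕ) : ℕ :=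
  Nat.card {w : List (Fin q) // w.length = m ∧ VN k I J w}

lemma cnt_zero (k : ℕ) : cnt k I J 0 = 1 := by
  have e : {w : List (Fin q) // w.length = 0 ∧ VN k I J w} ≃ Unit :=
    { toFun := fun _ => Unit.unit
      invFun := fun _ => ⟨[], rfl, Or.inl rfl⟩
      left_inv := fun u => Subtype.ext (List.eq_nil_of_length_eq_zero u.2.1).symm
      right_inv := fun _ => rfl }
  rw [cnt, Nat.card_congr e]
  exact Nat.card_unique

lemma len_facts (hd : Disjoint I J) (hun : I ∪ J = Finset.univ) {k : ℕ}
    {w : List (Fin q)} {n i j : ℕ} (hv : Valid k I J w) (hw : w.length = n)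
    (hij : ((dec1 I w).length - 1, (dec2 I J w).length - 1) = (i, j)) :
    (dec1 I w).length = i + 1 ∧ (dec2 I J w).length = j + 1 ∧
      (dec3 I J w).length = n - (i + j + 2) ∧ i + j + 2 ≤ n := by
  obtain ⟨⟨hu1, -, hu3⟩, ⟨hv1, -, hv3⟩, -⟩ := dec_spec hd hun hv
  have h1 : 0 < (dec1 I w).length := List.length_pos_iff.mpr hu1
  have h2 : 0 < (dec2 I J w).length := List.length_pos_iff.mpr hv1
  have hsum := congrArg List.length (dec_append I J w)
  simp only [List.length_append, hw] at hsum
  rw [Prod.mk.injEq] at hij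
  obtain ⟨e1, e2⟩ := hij
  omega

noncomputable def fiber_equiv (hd : Disjoint I J) (hun : I ∪ J = Finset.univ) {k : ℕ} (hk : 2 ≤ k)
    {n i j : ℕ} (hi : i + 2 ≤ k) (hj : j + 2 ≤ k) (hsum : i + j + 2 ≤ n) :
    {w : {w : List (Fin q) // w.length = n ∧ Valid k I J w} //
        ((dec1 I w.1).length - 1, (dec2 I J w.1).length - 1) = (i, j)} ≃
      runT I (i+1) × runT J (j+1) ×
        {t : List (Fin q) // t.length = n - (i + j + 2) ∧ VN k I J t} :=
  { toFun := fun w =>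
      (⟨dec1 I w.1.1, (len_facts hd hun w.1.2.2 w.1.2.1 w.2).1,
          (dec_spec hd hun w.1.2.2).1.2.1⟩,
       ⟨dec2 I J w.1.1, (len_facts hd hun w.1.2.2 w.1.2.1 w.2).2.1,
          (dec_spec hd hun w.1.2.2).2.1.2.1⟩,
       ⟨dec3 I J w.1.1, (len_facts hd hun w.1.2.2 w.1.2.1 w.2).2.2.1,
          (dec_spec hd hun w.1.2.2).2.2⟩)
    invFun := fun x =>
      ⟨⟨x.1.1 ++ x.2.1.1 ++ x.2.2.1,
        by simp only [List.length_append, x.1.2.1, x.2.1.2.1, x.2.2.2.1]; omega,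
        comp_valid hd hun hk
          (by have := x.1.2.1; intro h; rw [h] at this; simp at this)
          x.1.2.2 (by rw [x.1.2.1]; omega)
          (by have := x.2.1.2.1; intro h; rw [h] at this; simp at this)
          x.2.1.2.2 (by rw [x.2.1.2.1]; omega)
          x.2.2.2.2⟩,
       by
        have hcd := comp_dec hd hun
          (u := x.1.1) (v := x.2.1.1) (t := x.2.2.1)
          (by have := x.1.2.1; intro h; rw [h] at this; simp at this)
          x.1.2.2
          (by have := x.2.1.2.1; intro h; rw [h] at this; simp at this)
          x.2.1.2.2 x.2.2.2.2
        rw [hcd.1, hcd.2.1, x.1.2.1, x.2.1.2.1]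
        simp⟩
    left_inv := fun w => Subtype.ext (Subtype.ext (by
      show dec1 I w.1.1 ++ dec2 I J w.1.1 ++ dec3 I J w.1.1 = w.1.1
      rw [List.append_assoc]; exact dec_append I J w.1.1))
    right_inv := fun x => by
      obtain ⟨⟨u, hu⟩, ⟨v, hv⟩, ⟨t, ht⟩⟩ := x
      have hune : u ≠ [] := by have := hu.1; intro h; rw [h] at this; simp at this
      have hvne : v ≠ [] := by have := hv.1; intro h; rw [h] at this; simp at this
      have hcd := comp_dec hd hun (k := k) hune hu.2 hvne hv.2 ht.2
      refine Prod.ext (Subtype.ext ?_) (Prod.ext (Subtype.ext ?_) (Subtype.ext ?_))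
      · show dec1 I (u ++ v ++ t) = u; exact hcd.1
      · show dec2 I J (u ++ v ++ t) = v; exact hcd.2.1
      · show dec3 I J (u ++ v ++ t) = t; exact hcd.2.2 }

lemma cnt_rec (hd : Disjoint I J) (hun : I ∪ J = Finset.univ) {k : ℕ} (hk : 2 ≤ k)
    {n : ℕ} (hn : 1 ≤ n) :
    cnt k I J n = ∑ i ∈ Finset.range (k-1), ∑ j ∈ Finset.range (k-1),
      if i + j + 2 ≤ n then I.card ^ (i+1) * J.card ^ (j+1) * cnt k I J (n - (i+j+2))
      else 0 := by
  classical
  have e0 : {w : List (Fin q) // w.length = n ∧ VN k I J w} ≃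
      {w : List (Fin q) // w.length = n ∧ Valid k I J w} := by
    refine Equiv.subtypeEquivRight fun w => ?_
    constructor
    · rintro ⟨h1, rfl | h2⟩
      · simp at h1; omega
      · exact ⟨h1, h2⟩
    · rintro ⟨h1, h2⟩
      exact ⟨h1, Or.inr h2⟩
  rw [cnt, Nat.card_congr e0]
  set T := {w : List (Fin q) // w.length = n ∧ Valid k I J w} with hT
  haveI : Finite T := finite_subtype n _
  set P : Finset (ℕ × ℕ) :=
    (Finset.range (k-1) ×ˢ Finset.range (k-1)).filter (fun p => p.1 + p.2 + 2 ≤ n) with hP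
  set f : T → ℕ × ℕ :=
    fun w => ((dec1 I w.1).length - 1, (dec2 I J w.1).length - 1) with hf
  have hfP : ∀ w : T, f w ∈ P := by
    intro w
    obtain ⟨⟨hu1, -, hu3⟩, ⟨hv1, -, hv3⟩, -⟩ := dec_spec hd hun w.2.2
    have h1 : 0 < (dec1 I w.1).length := List.length_pos_iff.mpr hu1
    have h2 : 0 < (dec2 I J w.1).length := List.length_pos_iff.mpr hv1
    have hsum := congrArg List.length (dec_append I J w.1)
    simp only [List.length_append, w.2.1] at hsum
    simp only [hP, hf, Finset.mem_filter, Finset.mem_product, Finset.mem_range]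
    omega
  rw [card_partition f P hfP]
  have step : ∀ p ∈ P, Nat.card {w : T // f w = p} =
      I.card ^ (p.1+1) * J.card ^ (p.2+1) * cnt k I J (n - (p.1+p.2+2)) := by
    rintro ⟨i, j⟩ hp
    simp only [hP, Finset.mem_filter, Finset.mem_product, Finset.mem_range] at hp
    rw [Nat.card_congr (fiber_equiv hd hun hk (by omega) (by omega) hp.2),
      Nat.card_prod, Nat.card_prod, card_runT, card_runT, ← cnt, mul_assoc]
  rw [Finset.sum_congr rfl step, hP, Finset.sum_filter, Finset.sum_product]

end S13

open PowerSeries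

/-- The generating function `∑_{n ≥ 0} r n xⁿ`, where `r n` counts words
of length `n` over `ℤ_q` starting in `I`, ending in `J`, with no `k` consecutive letters
from `I` nor `k` consecutive letters from `J` (and `r 0 = 1`), satisfies
`(1 - qx + (|I|^k|J| + |I||J|^k)x^{k+1} - |I|^k|J|^k x^{2k}) ∑ r n xⁿ = |I||J|x² - qx + 1`
as formal power series. -/
theorem stmt13 (q k : ℕ) (hq : 2 ≤ q) (hk : 2 ≤ k)
    (I J : Finset (Fin q)) (hI : I.Nonempty) (hJ : J.Nonempty)
    (hd : Disjoint I J) (hun : I ∪ J = Finset.univ)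
    (r : ℕ → ℕ) (h0 : r 0 = 1)
    (hcard : ∀ m : ℕ, 1 ≤ m → r m = Nat.card {w : List (Fin q) //
      w.length = m ∧ w.getD 0 ⟨0, by omega⟩ ∈ I ∧ w.getD (m - 1) ⟨0, by omega⟩ ∈ J ∧
      (¬ ∃ v : List (Fin q), v.length = k ∧ (∀ a ∈ v, a ∈ I) ∧ v <:+: w) ∧
      (¬ ∃ v : List (Fin q), v.length = k ∧ (∀ a ∈ v, a ∈ J) ∧ v <:+: w)}) :
    (1 - C (R := ℤ) (q : ℤ) * X
        + C (R := ℤ) ((I.card : ℤ) ^ k * J.card + I.card * (J.card : ℤ) ^ k) * X ^ (k + 1)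
        - C (R := ℤ) ((I.card : ℤ) ^ k * (J.card : ℤ) ^ k) * X ^ (2 * k)) *
        PowerSeries.mk (fun n => (r n : ℤ)) =
      C (R := ℤ) ((I.card : ℤ) * J.card) * X ^ 2 - C (R := ℤ) (q : ℤ) * X + 1 := by
  classical
  -- bridge : r m equals the cardinality count `cnt`
  have hrc : ∀ m, r m = S13.cnt k I J m := by
    intro m
    rcases Nat.eq_zero_or_pos m with rfl | hm
    · rw [h0, S13.cnt_zero]
    · rw [hcard m hm, S13.cnt]
      apply Nat.card_congr
      refine Equiv.subtypeEquivRight fun w => ?_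
      constructor
      · rintro ⟨hl, h1, h2, h3, h4⟩
        subst hl
        have hne : w ≠ [] := by intro h; rw [h] at hm; simp at hm
        refine ⟨rfl, Or.inr ⟨hne, ?_, ?_, h3, h4⟩⟩
        · rw [List.head_eq_getElem]
          rwa [List.getD_eq_getElem _ _ (by omega)] at h1
        · rw [List.getLast_eq_getElem]
          rwa [List.getD_eq_getElem _ _ (by omega)] at h2
      · rintro ⟨hl, rfl | ⟨hne, h1, h2, h3, h4⟩⟩
        · simp at hl; omega
        · subst hl
          refine ⟨rfl, ?_, ?_, h3, h4⟩
          · rw [List.getD_eq_getElem _ _ (by omega)]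
            rw [List.head_eq_getElem] at h1
            exact h1
          · rw [List.getD_eq_getElem _ _ (by omega)]
            rw [List.getLast_eq_getElem] at h2
            exact h2
  -- the recurrence, in ℕ
  have hNN : ∀ n, 1 ≤ n → r n = ∑ i ∈ Finset.range (k-1), ∑ j ∈ Finset.range (k-1),
      if i + j + 2 ≤ n then I.card ^ (i+1) * J.card ^ (j+1) * r (n - (i+j+2)) else 0 := by
    intro n hn
    rw [hrc n, S13.cnt_rec hd hun hk hn]
    exact Finset.sum_congr rfl fun i _ => Finset.sum_congr rfl fun j _ => by
      split
      · rw [hrc]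
      · rfl
  have hq' : I.card + J.card = q := by
    have h1 := Finset.card_union_of_disjoint hd
    rw [hun] at h1
    simp only [Finset.card_univ, Fintype.card_fin] at h1
    omega
  set a : ℤ := (I.card : ℤ) with ha
  set b : ℤ := (J.card : ℤ) with hb
  set R : PowerSeries ℤ := PowerSeries.mk (fun n => (r n : ℤ)) with hR
  set F : PowerSeries ℤ := ∑ i ∈ Finset.range (k-1), C (R := ℤ) (a^(i+1)) * X^(i+1) with hF
  set G : PowerSeries ℤ := ∑ i ∈ Finset.range (k-1), C (R := ℤ) (b^(i+1)) * X^(i+1) with hG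
  have hcoeff : ∀ (c : ℤ) (m n : ℕ),
      coeff (R := ℤ) n (C (R := ℤ) c * X^m * R) = if m ≤ n then c * (r (n-m) : ℤ) else 0 := by
    intro c m n
    rw [show C (R := ℤ) c * X^m * R = C (R := ℤ) c * (R * X^m) by ring, coeff_C_mul,
      PowerSeries.coeff_mul_X_pow']
    split <;> simp [hR, coeff_mk]
  have hFG : F * G * R = ∑ i ∈ Finset.range (k-1), ∑ j ∈ Finset.range (k-1),
      C (R := ℤ) (a^(i+1) * b^(j+1)) * X^(i+j+2) * R := by
    rw [hF, hG, Finset.sum_mul_sum, Finset.sum_mul]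
    refine Finset.sum_congr rfl fun i _ => ?_
    rw [Finset.sum_mul]
    refine Finset.sum_congr rfl fun j _ => ?_
    rw [map_mul]
    ring
  have hRrec : R = 1 + F * G * R := by
    ext n
    rw [map_add, hFG, map_sum]
    simp only [map_sum, hcoeff]
    rcases Nat.eq_zero_or_pos n with rfl | hn
    · simp [hR, coeff_mk, h0]
    · rw [hR, coeff_mk]
      have : (coeff (R := ℤ) n) 1 = 0 := by
        rw [PowerSeries.coeff_one, if_neg (by omega)]
      rw [this, zero_add, hNN n hn]
      push_cast
      refine Finset.sum_congr rfl fun i _ => Finset.sum_congr rfl fun j _ => ?_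
      split <;> push_cast <;> ring
  have hFtel : (1 - C (R := ℤ) a * X) * F = C (R := ℤ) a * X - C (R := ℤ) (a^k) * X^k := by
    rw [hF, Finset.mul_sum]
    rw [Finset.sum_congr rfl (fun i (_ : i ∈ Finset.range (k-1)) =>
      show (1 - C (R := ℤ) a * X) * (C (R := ℤ) (a^(i+1)) * X^(i+1)) =
        (fun i => C (R := ℤ) (a^(i+1)) * X^(i+1)) i - (fun i => C (R := ℤ) (a^(i+1)) * X^(i+1)) (i+1) by
      simp only
      rw [pow_succ a (i+1), map_mul]
      ring), Finset.sum_range_sub']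
    rw [show k - 1 + 1 = k by omega]
    simp [pow_one]
  have hGtel : (1 - C (R := ℤ) b * X) * G = C (R := ℤ) b * X - C (R := ℤ) (b^k) * X^k := by
    rw [hG, Finset.mul_sum]
    rw [Finset.sum_congr rfl (fun i (_ : i ∈ Finset.range (k-1)) =>
      show (1 - C (R := ℤ) b * X) * (C (R := ℤ) (b^(i+1)) * X^(i+1)) =
        (fun i => C (R := ℤ) (b^(i+1)) * X^(i+1)) i - (fun i => C (R := ℤ) (b^(i+1)) * X^(i+1)) (i+1) by
      simp only
      rw [pow_succ b (i+1), map_mul]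
      ring), Finset.sum_range_sub']
    rw [show k - 1 + 1 = k by omega]
    simp [pow_one]
  have hq2 : C (R := ℤ) (q : ℤ) = C (R := ℤ) a + C (R := ℤ) b := by
    rw [← map_add]
    congr 1
    rw [ha, hb]
    exact_mod_cast hq'.symm
  have hkey : R - F * G * R = 1 := by linear_combination hRrec
  have hP : (1 - C (R := ℤ) (q : ℤ) * X + C (R := ℤ) (a ^ k * b + a * b ^ k) * X ^ (k + 1)
        - C (R := ℤ) (a ^ k * b ^ k) * X ^ (2 * k))
      = (1 - C (R := ℤ) a * X) * (1 - C (R := ℤ) b * X) - ((1 - C (R := ℤ) a * X) * F) * ((1 - C (R := ℤ) b * X) * G) := by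
    rw [hFtel, hGtel, hq2]
    simp only [map_mul, map_add, map_pow]
    ring
  rw [hP, hq2, map_mul]
  linear_combination ((1 - C (R := ℤ) a * X) * (1 - C (R := ℤ) b * X)) * hkey
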